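/- With 𝒫 as above, the projector commutes with ℒ = D_t + A(t): for all sufficiently regular u, ℒ(𝒫u) = 𝒫(ℒu). -/

import Mathlib

open MeasureTheory

/-- The `X`-valued projection `𝒫u(t) = ∑_c ∑_{m < L c} (u(t), ψ_{c,m}(t))_Y
· φ_{c, L c - 1 - m}(t)`. -/
noncomputable def PprojX
    {X Y : Type*} [NormedAddCommGroup X] [InnerProductSpace ℂ X]
    [NormedAddCommGroup Y] [InnerProductSpace ℂ Y]
    (e : X →L[ℂ] Y) (Nc : ℕ) (L : Fin Nc → ℕ)
    (φ : Fin Nc → ℕ → ℝ → X) (ψ : Fin Nc → ℕ → ℝ → Y)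
    (u : ℝ → X) (t : ℝ) : X :=
  ∑ c : Fin Nc, ∑ mm ∈ Finset.range (L c),
    (inner ℂ (ψ c mm t) (e (u t)) : ℂ) • φ c (L c - 1 - mm) t

/-- Theorem 5.1(ii): the projector `𝒫` commutes with
`ℒ = D_t + A(t)`: for sufficiently regular `u`, `ℒ(𝒫u) = 𝒫(ℒu)`. -/
theorem stmt13
    {X Y : Type*} [NormedAddCommGroup X] [InnerProductSpace ℂ X] [CompleteSpace X]
    [NormedAddCommGroup Y] [InnerProductSpace ℂ Y] [CompleteSpace Y]
    (e : X →L[ℂ] Y) (A : ℝ → X →L[ℂ] Y)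
    (Nc : ℕ) (lam : Fin Nc → ℂ) (L : Fin Nc → ℕ) (hL : ∀ c, 1 ≤ L c)
    (φ : Fin Nc → ℕ → ℝ → X) (φ' : Fin Nc → ℕ → ℝ → Y)
    (ψ ψ' : Fin Nc → ℕ → ℝ → Y)
    (hφderiv : ∀ c mm, mm < L c → ∀ t, HasDerivAt (fun s => e (φ c mm s)) (φ' c mm t) t)
    (hψderiv : ∀ c mm, mm < L c → ∀ t, HasDerivAt (ψ c mm) (ψ' c mm t) t)
    -- Jordan chain equations for 𝒜(λ_c):
    (hφchain : ∀ c mm, mm < L c → ∀ t,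
      φ' c mm t + A t (φ c mm t) + lam c • e (φ c mm t)
        + (if mm = 0 then 0 else e (φ c (mm - 1) t)) = 0)
    -- Jordan chain equations for 𝒜*(λ_c), tested against X:
    (hψchain : ∀ c mm, mm < L c → ∀ (x : X) (t : ℝ),
      (inner ℂ (ψ' c mm t) (e x) : ℂ) =
        (inner ℂ (ψ c mm t) ((A t x : Y)) : ℂ) + lam c * (inner ℂ (ψ c mm t) (e x) : ℂ)
          + (inner ℂ (if mm = 0 then (0 : Y) else ψ c (mm - 1) t) (e x) : ℂ))
    -- pointwise biorthogonality:
    (hbi : ∀ (c c' : Fin Nc) (mm MM : ℕ), mm < L c → MM < L c' → ∀ t : ℝ,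
      (inner ℂ (ψ c' MM t) (e (φ c (L c - 1 - mm) t)) : ℂ) =
        if c = c' ∧ mm = MM then 1 else 0)
    (u : ℝ → X) (u' : ℝ → Y)
    (huderiv : ∀ t, HasDerivAt (fun s => e (u s)) (u' t) t) :
    ∃ w : ℝ → Y,
      (∀ t, HasDerivAt (fun s => e (PprojX e Nc L φ ψ u s)) (w t) t) ∧
      ∀ t : ℝ, w t + A t (PprojX e Nc L φ ψ u t) =
        ∑ c : Fin Nc, ∑ mm ∈ Finset.range (L c),
          (inner ℂ (ψ c mm t) (u' t + A t (u t)) : ℂ) • e (φ c (L c - 1 - mm) t) := by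
  classical
  refine ⟨fun t =>
    ∑ c : Fin Nc, ∑ mm ∈ Finset.range (L c),
      ((inner ℂ (ψ c mm t) (e (u t)) : ℂ) • φ' c (L c - 1 - mm) t
        + ((inner ℂ (ψ c mm t) (u' t) : ℂ) + (inner ℂ (ψ' c mm t) (e (u t)) : ℂ))
            • e (φ c (L c - 1 - mm) t)), ?_, ?_⟩
  · intro t
    have heq : (fun s => e (PprojX e Nc L φ ψ u s))
        = fun s => ∑ c : Fin Nc, ∑ mm ∈ Finset.range (L c),
            (inner ℂ (ψ c mm s) (e (u s)) : ℂ) • e (φ c (L c - 1 - mm) s) := by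
      funext s
      simp [PprojX, map_sum, _root_.map_smul]
    rw [heq]
    apply HasDerivAt.fun_sum
    intro c _
    apply HasDerivAt.fun_sum
    intro mm hmm
    rw [Finset.mem_range] at hmm
    have hk : L c - 1 - mm < L c :=
      lt_of_le_of_lt (Nat.sub_le _ _) (Nat.sub_lt (hL c) one_pos)
    exact HasDerivAt.smul ((hψderiv c mm hmm t).inner ℂ (huderiv t)) (hφderiv c _ hk t)
  · intro t
    have hA : A t (PprojX e Nc L φ ψ u t)
        = ∑ c : Fin Nc, ∑ mm ∈ Finset.range (L c),
            (inner ℂ (ψ c mm t) (e (u t)) : ℂ) • A t (φ c (L c - 1 - mm) t) := by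
      simp [PprojX, map_sum, _root_.map_smul]
    rw [hA, ← Finset.sum_add_distrib]
    refine Finset.sum_congr rfl fun c _ => ?_
    rw [← Finset.sum_add_distrib]
    have hshift :
        (∑ mm ∈ Finset.range (L c),
          (inner ℂ (if mm = 0 then (0 : Y) else ψ c (mm - 1) t) (e (u t)) : ℂ)
            • e (φ c (L c - 1 - mm) t))
        = ∑ mm ∈ Finset.range (L c),
            (inner ℂ (ψ c mm t) (e (u t)) : ℂ)
              • (if L c - 1 - mm = 0 then (0 : Y)
                  else e (φ c (L c - 1 - mm - 1) t)) := by
      obtain ⟨n, hn⟩ : ∃ n, L c = n + 1 := ⟨L c - 1, (Nat.succ_pred_eq_of_pos (hL c)).symm⟩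
      rw [hn, Finset.sum_range_succ', Finset.sum_range_succ]
      simp only [Nat.add_sub_cancel, Nat.sub_self, reduceIte, if_true,
        inner_zero_left, zero_smul, smul_zero, add_zero, zero_add]
      refine Finset.sum_congr rfl fun i hi => ?_
      rw [Finset.mem_range] at hi
      rw [if_neg (show ¬ i + 1 = 0 by omega), if_neg (show ¬ n - i = 0 by omega),
        Nat.sub_sub]
    have key : (∑ mm ∈ Finset.range (L c),
          ((inner ℂ (ψ c mm t) (e (u t)) : ℂ) • φ' c (L c - 1 - mm) t
            + ((inner ℂ (ψ c mm t) (u' t) : ℂ) + (inner ℂ (ψ' c mm t) (e (u t)) : ℂ))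
                • e (φ c (L c - 1 - mm) t)
            + (inner ℂ (ψ c mm t) (e (u t)) : ℂ) • A t (φ c (L c - 1 - mm) t)))
        = ∑ mm ∈ Finset.range (L c),
            ((inner ℂ (ψ c mm t) (u' t + A t (u t)) : ℂ) • e (φ c (L c - 1 - mm) t)
              + (inner ℂ (if mm = 0 then (0 : Y) else ψ c (mm - 1) t) (e (u t)) : ℂ)
                  • e (φ c (L c - 1 - mm) t)
              - (inner ℂ (ψ c mm t) (e (u t)) : ℂ)
                  • (if L c - 1 - mm = 0 then (0 : Y)
                      else e (φ c (L c - 1 - mm - 1) t))) := by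
      refine Finset.sum_congr rfl fun mm hmm => ?_
      rw [Finset.mem_range] at hmm
      have hk : L c - 1 - mm < L c :=
        lt_of_le_of_lt (Nat.sub_le _ _) (Nat.sub_lt (hL c) one_pos)
      have h1 := hφchain c (L c - 1 - mm) hk t
      have h2 := hψchain c mm hmm (u t) t
      rw [h2, inner_add_right]
      linear_combination (norm := module) (inner ℂ (ψ c mm t) (e (u t)) : ℂ) • h1
    rw [key, Finset.sum_sub_distrib, Finset.sum_add_distrib, hshift, add_sub_cancel_right]
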